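/- arXiv:1210.5607 — 2 statements merged into one kernel-verified Lean document; each statement's English description precedes it below -/
import Mathlib

section
/- Let v_1 v_2 v_3 v_4 be a path on 4 distinct vertices in a graph G, k ≥ 1, and let c be a nonrepetitive coloring of G[E_k]. Then either the color sets c[v_1[E_k]], c[v_2[E_k]], c[v_3[E_k]] of the first three layers are pairwise disjoint, or the color sets c[v_2[E_k]], c[v_3[E_k]], c[v_4[E_k]] of the last three layers are pairwise disjoint. In particular, if all four layers are rainbow colored, then c uses at least 3k colors. -/
/-- The lexicographic product `G[H]` of two simple graphs. -/
def lexProd {V W : Type*} (G : SimpleGraph V) (H : SimpleGraph W) : SimpleGraph (V × W) where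
  Adj x y := G.Adj x.1 y.1 ∨ (x.1 = y.1 ∧ H.Adj x.2 y.2)
  symm := by
    constructor
    rintro ⟨a, b⟩ ⟨a', b'⟩ (h | ⟨h1, h2⟩)
    · exact Or.inl h.symm
    · exact Or.inr ⟨h1.symm, h2.symm⟩
  loopless := by
    constructor
    rintro ⟨a, b⟩ (h | ⟨_, h2⟩)
    · exact G.loopless.irrefl a h
    · exact H.loopless.irrefl b h2

/-- A coloring `c` of a graph `G` is nonrepetitive if there is no path
`v₁ v₂ … v_{2l}` (pairwise distinct vertices, consecutive ones adjacent) with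
`c vᵢ = c v_{l+i}` for all `1 ≤ i ≤ l`. -/
def IsNonrepetitive {V α : Type*} (G : SimpleGraph V) (c : V → α) : Prop :=
  ∀ l : ℕ, 0 < l → ∀ f : ℕ → V,
    (∀ i j, i < 2 * l → j < 2 * l → f i = f j → i = j) →
    (∀ i, i + 1 < 2 * l → G.Adj (f i) (f (i + 1))) →
    ¬ (∀ i, i < l → c (f i) = c (f (i + l)))

/-- The Thue chromatic number: least number of colors in a nonrepetitive coloring. -/
noncomputable def thueNumber {V : Type*} (G : SimpleGraph V) : ℕ :=
  sInf {n : ℕ | ∃ c : V → Fin n, IsNonrepetitive G c}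

/-- The rainbow Thue chromatic number of `G[H]`: least number of colors in a
nonrepetitive coloring of `G[H]` in which every layer is rainbow colored. -/
noncomputable def rainbowThueNumber {V W : Type*} (G : SimpleGraph V) (H : SimpleGraph W) : ℕ :=
  sInf {n : ℕ | ∃ c : V × W → Fin n, IsNonrepetitive (lexProd G H) c ∧
    ∀ v : V, Function.Injective fun w : W => c (v, w)}

/-- The set of colors used by `c` on the layer `v[H]`. -/
def layerColors {V W α : Type*} (c : V × W → α) (v : V) : Set α :=
  Set.range fun w : W => c (v, w)
section Aux

variable {V α : Type*} {G : SimpleGraph V} {k : ℕ} {c : V × Fin k → α}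

lemma adjDisjoint
    (hnr : IsNonrepetitive (lexProd G (⊥ : SimpleGraph (Fin k))) c)
    {u v : V} (huv : G.Adj u v) :
    Disjoint (layerColors c u) (layerColors c v) := by
  rw [Set.disjoint_left]
  rintro a ⟨w1, h1⟩ ⟨w2, h2⟩
  refine hnr 1 one_pos (fun i => if i = 0 then (u, w1) else (v, w2)) ?_ ?_ ?_
  · intro i j hi hj hf
    have hne := huv.ne
    interval_cases i <;> interval_cases j <;> simp_all [Prod.ext_iff]
  · intro i hi
    have : i = 0 := by omega
    subst this
    exact Or.inl huv
  · intro i hi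
    have : i = 0 := by omega
    subst this
    exact h1.trans h2.symm

lemma card3 {β : Type*} (f g h : Fin k → β)
    (hf : Function.Injective f) (hg : Function.Injective g) (hh : Function.Injective h)
    (d1 : Disjoint (Set.range f) (Set.range g))
    (d2 : Disjoint (Set.range f) (Set.range h))
    (d3 : Disjoint (Set.range g) (Set.range h)) :
    ∃ S : Finset β, ↑S ⊆ Set.range f ∪ Set.range g ∪ Set.range h ∧ 3 * k ≤ S.card := by
  classical
  refine ⟨Finset.univ.image f ∪ Finset.univ.image g ∪ Finset.univ.image h, ?_, ?_⟩
  · simp only [Finset.coe_union, Finset.coe_image, Finset.coe_univ, Set.image_univ]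
    exact subset_rfl
  · have hfg : Disjoint (Finset.univ.image f) (Finset.univ.image g) := by
      rw [← Finset.disjoint_coe]; simpa [Set.image_univ] using d1
    have hfh : Disjoint (Finset.univ.image f) (Finset.univ.image h) := by
      rw [← Finset.disjoint_coe]; simpa [Set.image_univ] using d2
    have hgh : Disjoint (Finset.univ.image g) (Finset.univ.image h) := by
      rw [← Finset.disjoint_coe]; simpa [Set.image_univ] using d3
    rw [Finset.card_union_of_disjoint (Finset.disjoint_union_left.mpr ⟨hfh, hgh⟩),
      Finset.card_union_of_disjoint hfg,
      Finset.card_image_of_injective _ hf, Finset.card_image_of_injective _ hg,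
      Finset.card_image_of_injective _ hh, Finset.card_univ, Fintype.card_fin]
    omega

end Aux

/-- If `v₁v₂v₃v₄` is a path on 4 distinct vertices of `G` and `c` is a nonrepetitive
coloring of `G[E_k]`, then either the color sets of the first three layers are pairwise
disjoint or the color sets of the last three layers are pairwise disjoint; moreover if
all four layers are rainbow colored then `c` uses at least `3k` colors. -/
theorem stmt_5 {V α : Type*} (G : SimpleGraph V) (k : ℕ) (hk : 1 ≤ k)
    (c : V × Fin k → α)
    (hnr : IsNonrepetitive (lexProd G (⊥ : SimpleGraph (Fin k))) c)
    (v₁ v₂ v₃ v₄ : V) (hdist : [v₁, v₂, v₃, v₄].Pairwise Ne)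
    (h12 : G.Adj v₁ v₂) (h23 : G.Adj v₂ v₃) (h34 : G.Adj v₃ v₄) :
    ((Disjoint (layerColors c v₁) (layerColors c v₂) ∧
      Disjoint (layerColors c v₁) (layerColors c v₃) ∧
      Disjoint (layerColors c v₂) (layerColors c v₃)) ∨
     (Disjoint (layerColors c v₂) (layerColors c v₃) ∧
      Disjoint (layerColors c v₂) (layerColors c v₄) ∧
      Disjoint (layerColors c v₃) (layerColors c v₄))) ∧
    ((∀ v ∈ [v₁, v₂, v₃, v₄], Function.Injective fun w : Fin k => c (v, w)) →
      ∃ S : Finset α, ↑S ⊆ Set.range c ∧ 3 * k ≤ S.card) := by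
  classical
  have hne : v₁ ≠ v₂ ∧ v₁ ≠ v₃ ∧ v₁ ≠ v₄ ∧ v₂ ≠ v₃ ∧ v₂ ≠ v₄ ∧ v₃ ≠ v₄ := by
    have := hdist
    simp [List.pairwise_cons] at this
    tauto
  obtain ⟨h12', h13', h14', h23', h24', h34'⟩ := hne
  have key : Disjoint (layerColors c v₁) (layerColors c v₃) ∨
      Disjoint (layerColors c v₂) (layerColors c v₄) := by
    by_contra hcon
    push_neg at hcon
    obtain ⟨hd13, hd24⟩ := hcon
    rw [Set.not_disjoint_iff] at hd13 hd24
    obtain ⟨a, ⟨w1, hw1⟩, ⟨w3, hw3⟩⟩ := hd13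
    obtain ⟨b, ⟨w2, hw2⟩, ⟨w4, hw4⟩⟩ := hd24
    refine hnr 2 (by norm_num)
      (fun i => if i = 0 then (v₁, w1) else if i = 1 then (v₂, w2)
        else if i = 2 then (v₃, w3) else (v₄, w4)) ?_ ?_ ?_
    · intro i j hi hj hf
      interval_cases i <;> interval_cases j <;> simp_all [Prod.ext_iff]
    · intro i hi
      have : i < 3 := by omega
      interval_cases i
      · exact Or.inl h12
      · exact Or.inl h23
      · exact Or.inl h34
    · intro i hi
      have : i < 2 := by omega
      interval_cases i
      · exact hw1.trans hw3.symm
      · exact hw2.trans hw4.symm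
  have main : (Disjoint (layerColors c v₁) (layerColors c v₂) ∧
      Disjoint (layerColors c v₁) (layerColors c v₃) ∧
      Disjoint (layerColors c v₂) (layerColors c v₃)) ∨
     (Disjoint (layerColors c v₂) (layerColors c v₃) ∧
      Disjoint (layerColors c v₂) (layerColors c v₄) ∧
      Disjoint (layerColors c v₃) (layerColors c v₄)) := by
    rcases key with h | h
    · exact Or.inl ⟨adjDisjoint hnr h12, h, adjDisjoint hnr h23⟩
    · exact Or.inr ⟨adjDisjoint hnr h23, h, adjDisjoint hnr h34⟩
  refine ⟨main, fun hinj => ?_⟩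
  have sub : ∀ v : V, Set.range (fun w : Fin k => c (v, w)) ⊆ Set.range c := by
    rintro v x ⟨w, rfl⟩; exact ⟨(v, w), rfl⟩
  rcases main with ⟨d1, d2, d3⟩ | ⟨d1, d2, d3⟩
  · obtain ⟨S, hS, hcard⟩ := card3 (fun w => c (v₁, w)) (fun w => c (v₂, w)) (fun w => c (v₃, w))
      (hinj v₁ (by simp)) (hinj v₂ (by simp)) (hinj v₃ (by simp)) d1 d2 d3
    exact ⟨S, hS.trans (by
      refine Set.union_subset (Set.union_subset ?_ ?_) ?_ <;> apply sub), hcard⟩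
  · obtain ⟨S, hS, hcard⟩ := card3 (fun w => c (v₂, w)) (fun w => c (v₃, w)) (fun w => c (v₄, w))
      (hinj v₂ (by simp)) (hinj v₃ (by simp)) (hinj v₄ (by simp)) d1 d2 d3
    exact ⟨S, hS.trans (by
      refine Set.union_subset (Set.union_subset ?_ ?_) ?_ <;> apply sub), hcard⟩
end

section
/- For every k ≥ 1, every rainbow nonrepetitive coloring of T_{3,6}[E_k] uses at least 4k colors, where T_{3,6} is the rooted tree in which the root has 3 children, every other non-leaf vertex has degree 3 (i.e., 2 children), and all leaves are at distance 5 from the root. -/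
section Aux

open SimpleGraph Walk

variable {V : Type*} [DecidableEq V] {G : SimpleGraph V}

lemma tree_path_length_eq_dist (hG : G.IsTree) {u v : V}
    (p : G.Walk u v) (hp : p.IsPath) : p.length = G.dist u v := by
  obtain ⟨q, hq, hql⟩ := hG.isConnected.exists_path_of_dist u v
  obtain ⟨w, hw, huniq⟩ := hG.existsUnique_path u v
  rw [huniq p hp, huniq q hq] at *
  omega

lemma concat_isPath (hG : G.IsTree) {r u w : V} (p : G.Walk r u) (hp : p.IsPath)
    (h : G.Adj u w) (hw : w ∉ p.support) : (p.concat h).IsPath := by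
  rw [← Walk.isPath_reverse_iff, Walk.reverse_concat]
  exact (hp.reverse).cons (by simpa using hw)

lemma adj_dist_eq_add_one (hG : G.IsTree) (r : V) {u w : V} (h : G.Adj u w) :
    G.dist r w = G.dist r u + 1 ∨ G.dist r u = G.dist r w + 1 := by
  have hc := hG.isConnected
  have h1 : G.dist r w ≤ G.dist r u + 1 := by
    have := hc.dist_triangle (u := r) (v := u) (w := w)
    have : G.dist u w = 1 := (SimpleGraph.dist_eq_one_iff_adj).2 h
    have := hc.dist_triangle (u := r) (v := u) (w := w)
    omega
  have h2 : G.dist r u ≤ G.dist r w + 1 := by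
    have : G.dist w u = 1 := (SimpleGraph.dist_eq_one_iff_adj).2 h.symm
    have := hc.dist_triangle (u := r) (v := w) (w := u)
    omega
  by_contra hcon
  push_neg at hcon
  have heq : G.dist r w = G.dist r u := by omega
  obtain ⟨p, hp, hpl⟩ := hc.exists_path_of_dist r u
  by_cases hw : w ∈ p.support
  · have hsplit := p.take_spec hw
    have hlen : (p.takeUntil w hw).length + (p.dropUntil w hw).length = p.length := by
      rw [← Walk.length_append, hsplit]
    have h3 : (p.takeUntil w hw).length = G.dist r w :=
      tree_path_length_eq_dist hG _ (hp.takeUntil hw)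
    have h4 : (p.dropUntil w hw).length = 0 := by omega
    exact h.ne (Walk.eq_of_length_eq_zero h4).symm
  · have hq : (p.concat h).IsPath := concat_isPath hG p hp h hw
    have := tree_path_length_eq_dist hG _ hq
    rw [Walk.length_concat] at this
    omega

lemma unique_parent (hG : G.IsTree) (r : V) {u v x : V} (hux : G.Adj u x) (hvx : G.Adj v x)
    (hu : G.dist r u + 1 = G.dist r x) (hv : G.dist r v + 1 = G.dist r x) : u = v := by
  have hc := hG.isConnected
  obtain ⟨p, hp, hpl⟩ := hc.exists_path_of_dist r u
  obtain ⟨q, hq, hql⟩ := hc.exists_path_of_dist r v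
  have hxp : x ∉ p.support := by
    intro hx
    have h3 : (p.takeUntil x hx).length = G.dist r x :=
      tree_path_length_eq_dist hG _ (hp.takeUntil hx)
    have := p.length_takeUntil_le hx
    omega
  have hxq : x ∉ q.support := by
    intro hx
    have h3 : (q.takeUntil x hx).length = G.dist r x :=
      tree_path_length_eq_dist hG _ (hq.takeUntil hx)
    have := q.length_takeUntil_le hx
    omega
  have hP : (p.concat hux).IsPath := concat_isPath hG p hp hux hxp
  have hQ : (q.concat hvx).IsPath := concat_isPath hG q hq hvx hxq
  obtain ⟨w, hw, huniq⟩ := hG.existsUnique_path r x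
  have hPQ : p.concat hux = q.concat hvx := by rw [huniq _ hP, huniq _ hQ]
  have h1 : (p.concat hux).reverse.getVert 1 = u := by
    rw [Walk.reverse_concat]
    exact (Walk.getVert_cons_succ (n := 0) _ _).trans (Walk.getVert_zero _)
  have h2 : (q.concat hvx).reverse.getVert 1 = v := by
    rw [Walk.reverse_concat]
    exact (Walk.getVert_cons_succ (n := 0) _ _).trans (Walk.getVert_zero _)
  rw [← h1, ← h2, hPQ]

lemma child_dist (hG : G.IsTree) (r : V) {pa v x : V} {d : ℕ}
    (hpadist : G.dist r pa = d) (hvdist : G.dist r v = d + 1)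
    (hpa : G.Adj pa v) (hx : G.Adj v x) (hxpa : x ≠ pa) : G.dist r x = d + 2 := by
  rcases adj_dist_eq_add_one hG r hx with h | h
  · omega
  · exact absurd (unique_parent hG r hx.symm hpa (by omega) (by omega)) hxpa

lemma exists_children [Fintype V] (hG : G.IsTree) (r : V) [DecidableRel G.Adj]
    {pa v : V} {d : ℕ}
    (hpadist : G.dist r pa = d) (hvdist : G.dist r v = d + 1)
    (hpa : G.Adj pa v) (hdeg : G.degree v = 3) :
    ∃ c1 c2 : V, c1 ≠ c2 ∧ G.Adj v c1 ∧ G.Adj v c2 ∧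
      G.dist r c1 = d + 2 ∧ G.dist r c2 = d + 2 := by
  have hcard : (G.neighborFinset v).card = 3 := hdeg
  obtain ⟨a, b, e, hab, hae, hbe, hs⟩ := Finset.card_eq_three.1 hcard
  have hmem : ∀ x, G.Adj v x ↔ x = a ∨ x = b ∨ x = e := by
    intro x
    rw [← SimpleGraph.mem_neighborFinset, hs]
    simp
  have hpam : pa = a ∨ pa = b ∨ pa = e := (hmem pa).1 hpa.symm
  have hAdj : ∀ x, x = a ∨ x = b ∨ x = e → G.Adj v x := fun x h => (hmem x).2 h
  rcases hpam with h | h | h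
  · exact ⟨b, e, hbe, hAdj b (by tauto), hAdj e (by tauto),
      child_dist hG r hpadist hvdist hpa (hAdj b (by tauto)) (by rw [h]; exact hab.symm),
      child_dist hG r hpadist hvdist hpa (hAdj e (by tauto)) (by rw [h]; exact hae.symm)⟩
  · exact ⟨a, e, hae, hAdj a (by tauto), hAdj e (by tauto),
      child_dist hG r hpadist hvdist hpa (hAdj a (by tauto)) (by rw [h]; exact hab),
      child_dist hG r hpadist hvdist hpa (hAdj e (by tauto)) (by rw [h]; exact hbe.symm)⟩
  · exact ⟨a, b, hab, hAdj a (by tauto), hAdj b (by tauto),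
      child_dist hG r hpadist hvdist hpa (hAdj a (by tauto)) (by rw [h]; exact hae),
      child_dist hG r hpadist hvdist hpa (hAdj b (by tauto)) (by rw [h]; exact hbe)⟩

lemma root_children [Fintype V] (hG : G.IsTree) (r : V) [DecidableRel G.Adj]
    (hdeg : G.degree r = 3) :
    ∃ a b e : V, a ≠ b ∧ a ≠ e ∧ b ≠ e ∧ G.Adj r a ∧ G.Adj r b ∧ G.Adj r e ∧
      G.dist r a = 1 ∧ G.dist r b = 1 ∧ G.dist r e = 1 := by
  have hcard : (G.neighborFinset r).card = 3 := hdeg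
  obtain ⟨a, b, e, hab, hae, hbe, hs⟩ := Finset.card_eq_three.1 hcard
  have hAdj : ∀ x, x ∈ ({a,b,e} : Finset V) → G.Adj r x := by
    intro x hx
    rw [← hs] at hx
    exact (SimpleGraph.mem_neighborFinset _ _ _).1 hx
  have ha := hAdj a (by simp)
  have hb := hAdj b (by simp)
  have he := hAdj e (by simp)
  exact ⟨a, b, e, hab, hae, hbe, ha, hb, he,
    SimpleGraph.dist_eq_one_iff_adj.2 ha, SimpleGraph.dist_eq_one_iff_adj.2 hb,
    SimpleGraph.dist_eq_one_iff_adj.2 he⟩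

end Aux

def RelC {V α : Type*} {k : ℕ} (c : V × Fin k → α) (u v : V) : Prop :=
  ∃ a b : Fin k, c (u, a) = c (v, b)

lemma relC_symm {V α : Type*} {k : ℕ} {c : V × Fin k → α} {u v : V}
    (h : RelC c u v) : RelC c v u := by
  obtain ⟨a, b, hab⟩ := h; exact ⟨b, a, hab.symm⟩

lemma nr2' {V α : Type*} {k : ℕ} {T : SimpleGraph V} {c : V × Fin k → α}
    (hnr : IsNonrepetitive (lexProd T (⊥ : SimpleGraph (Fin k))) c)
    {u v : V} (hadj : T.Adj u v) (h : RelC c u v) : False := by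
  obtain ⟨a, b, hab⟩ := h
  refine hnr 1 one_pos (fun i => if i = 0 then (u, a) else (v, b)) ?_ ?_ ?_
  · intro i j hi hj hf
    have hne := hadj.ne
    interval_cases i <;> interval_cases j <;> simp_all [Prod.ext_iff]
  · intro i hi
    have hi' : i < 1 := by omega
    interval_cases i
    exact Or.inl hadj
  · intro i hi
    interval_cases i
    exact hab

lemma nr4' {V α : Type*} {k : ℕ} {T : SimpleGraph V} {c : V × Fin k → α}
    (hnr : IsNonrepetitive (lexProd T (⊥ : SimpleGraph (Fin k))) c)
    {v0 v1 v2 v3 : V}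
    (h02 : v0 ≠ v2) (h13 : v1 ≠ v3) (h03 : v0 ≠ v3)
    (a01 : T.Adj v0 v1) (a12 : T.Adj v1 v2) (a23 : T.Adj v2 v3)
    (r1 : RelC c v0 v2) (r2 : RelC c v1 v3) : False := by
  obtain ⟨a0, a2, hc0⟩ := r1
  obtain ⟨a1, a3, hc1⟩ := r2
  refine hnr 2 (by norm_num)
    (fun i => if i = 0 then (v0, a0) else if i = 1 then (v1, a1)
      else if i = 2 then (v2, a2) else (v3, a3)) ?_ ?_ ?_
  · intro i j hi hj hf
    have h01 := a01.ne
    have h12 := a12.ne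
    have h23 := a23.ne
    interval_cases i <;> interval_cases j <;> simp_all [Prod.ext_iff]
  · intro i hi
    have hi' : i < 3 := by omega
    interval_cases i
    · exact Or.inl a01
    · exact Or.inl a12
    · exact Or.inl a23
  · intro i hi
    interval_cases i
    · exact hc0
    · exact hc1

lemma nr6' {V α : Type*} {k : ℕ} {T : SimpleGraph V} {c : V × Fin k → α}
    (hnr : IsNonrepetitive (lexProd T (⊥ : SimpleGraph (Fin k))) c)
    {v0 v1 v2 v3 v4 v5 : V}
    (h02 : v0 ≠ v2) (h03 : v0 ≠ v3) (h04 : v0 ≠ v4) (h05 : v0 ≠ v5)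
    (h13 : v1 ≠ v3) (h14 : v1 ≠ v4) (h15 : v1 ≠ v5)
    (h24 : v2 ≠ v4) (h25 : v2 ≠ v5) (h35 : v3 ≠ v5)
    (a01 : T.Adj v0 v1) (a12 : T.Adj v1 v2) (a23 : T.Adj v2 v3)
    (a34 : T.Adj v3 v4) (a45 : T.Adj v4 v5)
    (r1 : RelC c v0 v3) (r2 : RelC c v1 v4) (r3 : RelC c v2 v5) : False := by
  obtain ⟨a0, a3, hc0⟩ := r1
  obtain ⟨a1, a4, hc1⟩ := r2
  obtain ⟨a2, a5, hc2⟩ := r3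
  refine hnr 3 (by norm_num)
    (fun i => if i = 0 then (v0, a0) else if i = 1 then (v1, a1)
      else if i = 2 then (v2, a2) else if i = 3 then (v3, a3)
      else if i = 4 then (v4, a4) else (v5, a5)) ?_ ?_ ?_
  · intro i j hi hj hf
    have h01 := a01.ne
    have h12 := a12.ne
    have h23 := a23.ne
    have h34 := a34.ne
    have h45 := a45.ne
    interval_cases i <;> interval_cases j <;> simp_all [Prod.ext_iff]
  · intro i hi
    have hi' : i < 5 := by omega
    interval_cases i
    · exact Or.inl a01
    · exact Or.inl a12
    · exact Or.inl a23
    · exact Or.inl a34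
    · exact Or.inl a45
  · intro i hi
    interval_cases i
    · exact hc0
    · exact hc1
    · exact hc2

lemma key4 {V α : Type*} {k : ℕ} (hk : 1 ≤ k) (c : V × Fin k → α)
    (hrainbow : ∀ v : V, Function.Injective fun w : Fin k => c (v, w))
    (hcon : ∀ S : Finset α, ↑S ⊆ Set.range c → S.card < 4 * k)
    (v1 v2 v3 v4 : V) :
    RelC c v1 v2 ∨ RelC c v1 v3 ∨ RelC c v1 v4 ∨ RelC c v2 v3 ∨
      RelC c v2 v4 ∨ RelC c v3 v4 := by
  classical
  by_contra hq
  push_neg at hq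
  obtain ⟨h12, h13, h14, h23, h24, h34⟩ := hq
  set P : V → Finset α := fun v => Finset.image (fun w => c (v, w)) Finset.univ with hP
  have hdisj : ∀ u v : V, ¬ RelC c u v → Disjoint (P u) (P v) := by
    intro u v h
    rw [Finset.disjoint_left]
    intro x hx1 hx2
    simp only [hP, Finset.mem_image, Finset.mem_univ, true_and] at hx1 hx2
    obtain ⟨a, ha⟩ := hx1
    obtain ⟨b, hb⟩ := hx2
    exact h ⟨a, b, by rw [ha, hb]⟩
  have hcard : ∀ v, (P v).card = k := by
    intro v
    simp only [hP]
    rw [Finset.card_image_of_injective _ (hrainbow v), Finset.card_univ, Fintype.card_fin]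
  have hsub : ∀ v, ↑(P v) ⊆ Set.range c := by
    intro v x hx
    rw [Finset.mem_coe] at hx
    simp only [hP, Finset.mem_image, Finset.mem_univ, true_and] at hx
    obtain ⟨w, hw⟩ := hx
    exact ⟨(v, w), hw⟩
  have d12 := hdisj v1 v2 h12
  have d34 := hdisj v3 v4 h34
  have dbig : Disjoint (P v1 ∪ P v2) (P v3 ∪ P v4) :=
    Finset.disjoint_union_left.2 ⟨Finset.disjoint_union_right.2 ⟨hdisj v1 v3 h13, hdisj v1 v4 h14⟩,
      Finset.disjoint_union_right.2 ⟨hdisj v2 v3 h23, hdisj v2 v4 h24⟩⟩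
  have hcS : ((P v1 ∪ P v2) ∪ (P v3 ∪ P v4)).card = 4 * k := by
    rw [Finset.card_union_of_disjoint dbig, Finset.card_union_of_disjoint d12,
      Finset.card_union_of_disjoint d34, hcard, hcard, hcard, hcard]
    ring
  have hsS : ↑((P v1 ∪ P v2) ∪ (P v3 ∪ P v4)) ⊆ Set.range c := by
    push_cast
    intro x hx
    simp only [Finset.coe_union, Set.mem_union] at hx
    rcases hx with (h | h) | (h | h)
    · exact hsub v1 h
    · exact hsub v2 h
    · exact hsub v3 h
    · exact hsub v4 h
  have := hcon _ hsS
  omega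

/-- Every rainbow nonrepetitive coloring of `T_{3,6}[E_k]` uses at least `4k` colors,
where `T_{3,6}` is the tree whose root has 3 children, every other non-leaf vertex has
degree 3, and all leaves are at distance 5 from the root. -/
theorem stmt_6 {V α : Type*} [Fintype V] (T : SimpleGraph V) [DecidableRel T.Adj]
    (r : V) (hT : T.IsTree)
    (hroot : T.degree r = 3)
    (hdepth : ∀ v : V, T.dist r v ≤ 5)
    (hinternal : ∀ v : V, v ≠ r → T.dist r v < 5 → T.degree v = 3)
    (hleaf : ∀ v : V, T.dist r v = 5 → T.degree v = 1)
    (k : ℕ) (hk : 1 ≤ k) (c : V × Fin k → α)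
    (hnr : IsNonrepetitive (lexProd T (⊥ : SimpleGraph (Fin k))) c)
    (hrainbow : ∀ v : V, Function.Injective fun w : Fin k => c (v, w)) :
    ∃ S : Finset α, ↑S ⊆ Set.range c ∧ 4 * k ≤ S.card := by
  classical
  by_contra hcon
  push_neg at hcon
  have hdist_r : T.dist r r = 0 := by simp
  obtain ⟨x0, x1, x2, hne_x0_x1, hne_x0_x2, hne_x1_x2, hadj_r_x0, hadj_r_x1, hadj_r_x2, hdist_x0, hdist_x1, hdist_x2⟩ := root_children hT r hroot
  have hne_x1_r : x1 ≠ r := by intro h; rw [h] at hdist_x1; omega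
  obtain ⟨x10, x11, hne_x10_x11, hadj_x1_x10, hadj_x1_x11, hdraw_x10, hdraw_x11⟩ :=
    exists_children hT r hdist_r (show T.dist r x1 = 0 + 1 by omega) hadj_r_x1 (hinternal x1 hne_x1_r (by omega))
  have hdist_x10 : T.dist r x10 = 2 := by omega
  have hdist_x11 : T.dist r x11 = 2 := by omega
  have hne_x2_r : x2 ≠ r := by intro h; rw [h] at hdist_x2; omega
  obtain ⟨x20, x21, hne_x20_x21, hadj_x2_x20, hadj_x2_x21, hdraw_x20, hdraw_x21⟩ :=
    exists_children hT r hdist_r (show T.dist r x2 = 0 + 1 by omega) hadj_r_x2 (hinternal x2 hne_x2_r (by omega))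
  have hdist_x20 : T.dist r x20 = 2 := by omega
  have hdist_x21 : T.dist r x21 = 2 := by omega
  have hne_x11_r : x11 ≠ r := by intro h; rw [h] at hdist_x11; omega
  obtain ⟨x110, x111, hne_x110_x111, hadj_x11_x110, hadj_x11_x111, hdraw_x110, hdraw_x111⟩ :=
    exists_children hT r hdist_x1 (show T.dist r x11 = 1 + 1 by omega) hadj_x1_x11 (hinternal x11 hne_x11_r (by omega))
  have hdist_x110 : T.dist r x110 = 3 := by omega
  have hdist_x111 : T.dist r x111 = 3 := by omega
  have hne_x21_r : x21 ≠ r := by intro h; rw [h] at hdist_x21; omega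
  obtain ⟨x210, x211, hne_x210_x211, hadj_x21_x210, hadj_x21_x211, hdraw_x210, hdraw_x211⟩ :=
    exists_children hT r hdist_x2 (show T.dist r x21 = 1 + 1 by omega) hadj_x2_x21 (hinternal x21 hne_x21_r (by omega))
  have hdist_x210 : T.dist r x210 = 3 := by omega
  have hdist_x211 : T.dist r x211 = 3 := by omega
  have hne_x111_r : x111 ≠ r := by intro h; rw [h] at hdist_x111; omega
  obtain ⟨x1110, x1111, hne_x1110_x1111, hadj_x111_x1110, hadj_x111_x1111, hdraw_x1110, hdraw_x1111⟩ :=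
    exists_children hT r hdist_x11 (show T.dist r x111 = 2 + 1 by omega) hadj_x11_x111 (hinternal x111 hne_x111_r (by omega))
  have hdist_x1110 : T.dist r x1110 = 4 := by omega
  have hdist_x1111 : T.dist r x1111 = 4 := by omega
  have hne_x210_r : x210 ≠ r := by intro h; rw [h] at hdist_x210; omega
  obtain ⟨x2100, x2101, hne_x2100_x2101, hadj_x210_x2100, hadj_x210_x2101, hdraw_x2100, hdraw_x2101⟩ :=
    exists_children hT r hdist_x21 (show T.dist r x210 = 2 + 1 by omega) hadj_x21_x210 (hinternal x210 hne_x210_r (by omega))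
  have hdist_x2100 : T.dist r x2100 = 4 := by omega
  have hdist_x2101 : T.dist r x2101 = 4 := by omega
  have hne_x1110_r : x1110 ≠ r := by intro h; rw [h] at hdist_x1110; omega
  obtain ⟨x11100, x11100d, hne_x11100_x11100d, hadj_x1110_x11100, hadj_x1110_x11100d, hdraw_x11100, hdraw_x11100d⟩ :=
    exists_children hT r hdist_x111 (show T.dist r x1110 = 3 + 1 by omega) hadj_x111_x1110 (hinternal x1110 hne_x1110_r (by omega))
  have hdist_x11100 : T.dist r x11100 = 5 := by omega
  have hne_x2100_r : x2100 ≠ r := by intro h; rw [h] at hdist_x2100; omega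
  obtain ⟨x21001, x21001d, hne_x21001_x21001d, hadj_x2100_x21001, hadj_x2100_x21001d, hdraw_x21001, hdraw_x21001d⟩ :=
    exists_children hT r hdist_x210 (show T.dist r x2100 = 3 + 1 by omega) hadj_x210_x2100 (hinternal x2100 hne_x2100_r (by omega))
  have hdist_x21001 : T.dist r x21001 = 5 := by omega
  have hne_r_x0 : r ≠ x0 := by intro h; rw [← h] at hdist_x0; omega
  have hne_r_x10 : r ≠ x10 := by intro h; rw [← h] at hdist_x10; omega
  have hne_r_x20 : r ≠ x20 := by intro h; rw [← h] at hdist_x20; omega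
  have hne_r_x110 : r ≠ x110 := by intro h; rw [← h] at hdist_x110; omega
  have hne_r_x211 : r ≠ x211 := by intro h; rw [← h] at hdist_x211; omega
  have hne_r_x1111 : r ≠ x1111 := by intro h; rw [← h] at hdist_x1111; omega
  have hne_r_x2101 : r ≠ x2101 := by intro h; rw [← h] at hdist_x2101; omega
  have hne_r_x11100 : r ≠ x11100 := by intro h; rw [← h] at hdist_x11100; omega
  have hne_r_x21001 : r ≠ x21001 := by intro h; rw [← h] at hdist_x21001; omega
  have hne_x0_x10 : x0 ≠ x10 := by intro h; rw [h] at hdist_x0; omega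
  have hne_x0_x11 : x0 ≠ x11 := by intro h; rw [h] at hdist_x0; omega
  have hne_x0_x20 : x0 ≠ x20 := by intro h; rw [h] at hdist_x0; omega
  have hne_x0_x21 : x0 ≠ x21 := by intro h; rw [h] at hdist_x0; omega
  have hne_x0_x110 : x0 ≠ x110 := by intro h; rw [h] at hdist_x0; omega
  have hne_x0_x111 : x0 ≠ x111 := by intro h; rw [h] at hdist_x0; omega
  have hne_x0_x210 : x0 ≠ x210 := by intro h; rw [h] at hdist_x0; omega
  have hne_x0_x211 : x0 ≠ x211 := by intro h; rw [h] at hdist_x0; omega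
  have hne_x0_x1110 : x0 ≠ x1110 := by intro h; rw [h] at hdist_x0; omega
  have hne_x0_x1111 : x0 ≠ x1111 := by intro h; rw [h] at hdist_x0; omega
  have hne_x0_x2100 : x0 ≠ x2100 := by intro h; rw [h] at hdist_x0; omega
  have hne_x0_x2101 : x0 ≠ x2101 := by intro h; rw [h] at hdist_x0; omega
  have hne_x0_x11100 : x0 ≠ x11100 := by intro h; rw [h] at hdist_x0; omega
  have hne_x0_x21001 : x0 ≠ x21001 := by intro h; rw [h] at hdist_x0; omega
  have hne_x1_x10 : x1 ≠ x10 := by intro h; rw [h] at hdist_x1; omega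
  have hne_x1_x11 : x1 ≠ x11 := by intro h; rw [h] at hdist_x1; omega
  have hne_x1_x20 : x1 ≠ x20 := by intro h; rw [h] at hdist_x1; omega
  have hne_x1_x21 : x1 ≠ x21 := by intro h; rw [h] at hdist_x1; omega
  have hne_x1_x110 : x1 ≠ x110 := by intro h; rw [h] at hdist_x1; omega
  have hne_x1_x111 : x1 ≠ x111 := by intro h; rw [h] at hdist_x1; omega
  have hne_x1_x210 : x1 ≠ x210 := by intro h; rw [h] at hdist_x1; omega
  have hne_x1_x211 : x1 ≠ x211 := by intro h; rw [h] at hdist_x1; omega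
  have hne_x1_x1110 : x1 ≠ x1110 := by intro h; rw [h] at hdist_x1; omega
  have hne_x1_x1111 : x1 ≠ x1111 := by intro h; rw [h] at hdist_x1; omega
  have hne_x1_x2100 : x1 ≠ x2100 := by intro h; rw [h] at hdist_x1; omega
  have hne_x1_x2101 : x1 ≠ x2101 := by intro h; rw [h] at hdist_x1; omega
  have hne_x1_x11100 : x1 ≠ x11100 := by intro h; rw [h] at hdist_x1; omega
  have hne_x1_x21001 : x1 ≠ x21001 := by intro h; rw [h] at hdist_x1; omega
  have hne_x2_x10 : x2 ≠ x10 := by intro h; rw [h] at hdist_x2; omega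
  have hne_x2_x11 : x2 ≠ x11 := by intro h; rw [h] at hdist_x2; omega
  have hne_x2_x20 : x2 ≠ x20 := by intro h; rw [h] at hdist_x2; omega
  have hne_x2_x21 : x2 ≠ x21 := by intro h; rw [h] at hdist_x2; omega
  have hne_x2_x110 : x2 ≠ x110 := by intro h; rw [h] at hdist_x2; omega
  have hne_x2_x111 : x2 ≠ x111 := by intro h; rw [h] at hdist_x2; omega
  have hne_x2_x210 : x2 ≠ x210 := by intro h; rw [h] at hdist_x2; omega
  have hne_x2_x211 : x2 ≠ x211 := by intro h; rw [h] at hdist_x2; omega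
  have hne_x2_x1110 : x2 ≠ x1110 := by intro h; rw [h] at hdist_x2; omega
  have hne_x2_x1111 : x2 ≠ x1111 := by intro h; rw [h] at hdist_x2; omega
  have hne_x2_x2100 : x2 ≠ x2100 := by intro h; rw [h] at hdist_x2; omega
  have hne_x2_x2101 : x2 ≠ x2101 := by intro h; rw [h] at hdist_x2; omega
  have hne_x2_x11100 : x2 ≠ x11100 := by intro h; rw [h] at hdist_x2; omega
  have hne_x2_x21001 : x2 ≠ x21001 := by intro h; rw [h] at hdist_x2; omega
  have hne_x10_x20 : x10 ≠ x20 := by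
    intro h; rw [h] at hadj_x1_x10
    exact hne_x1_x2 (unique_parent hT r hadj_x1_x10 hadj_x2_x20 (by omega) (by omega))
  have hne_x10_x21 : x10 ≠ x21 := by
    intro h; rw [h] at hadj_x1_x10
    exact hne_x1_x2 (unique_parent hT r hadj_x1_x10 hadj_x2_x21 (by omega) (by omega))
  have hne_x10_x110 : x10 ≠ x110 := by intro h; rw [h] at hdist_x10; omega
  have hne_x10_x111 : x10 ≠ x111 := by intro h; rw [h] at hdist_x10; omega
  have hne_x10_x210 : x10 ≠ x210 := by intro h; rw [h] at hdist_x10; omega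
  have hne_x10_x211 : x10 ≠ x211 := by intro h; rw [h] at hdist_x10; omega
  have hne_x10_x1110 : x10 ≠ x1110 := by intro h; rw [h] at hdist_x10; omega
  have hne_x10_x1111 : x10 ≠ x1111 := by intro h; rw [h] at hdist_x10; omega
  have hne_x10_x2100 : x10 ≠ x2100 := by intro h; rw [h] at hdist_x10; omega
  have hne_x10_x2101 : x10 ≠ x2101 := by intro h; rw [h] at hdist_x10; omega
  have hne_x10_x11100 : x10 ≠ x11100 := by intro h; rw [h] at hdist_x10; omega
  have hne_x10_x21001 : x10 ≠ x21001 := by intro h; rw [h] at hdist_x10; omega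
  have hne_x11_x20 : x11 ≠ x20 := by
    intro h; rw [h] at hadj_x1_x11
    exact hne_x1_x2 (unique_parent hT r hadj_x1_x11 hadj_x2_x20 (by omega) (by omega))
  have hne_x11_x21 : x11 ≠ x21 := by
    intro h; rw [h] at hadj_x1_x11
    exact hne_x1_x2 (unique_parent hT r hadj_x1_x11 hadj_x2_x21 (by omega) (by omega))
  have hne_x11_x110 : x11 ≠ x110 := by intro h; rw [h] at hdist_x11; omega
  have hne_x11_x111 : x11 ≠ x111 := by intro h; rw [h] at hdist_x11; omega
  have hne_x11_x210 : x11 ≠ x210 := by intro h; rw [h] at hdist_x11; omega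
  have hne_x11_x211 : x11 ≠ x211 := by intro h; rw [h] at hdist_x11; omega
  have hne_x11_x1110 : x11 ≠ x1110 := by intro h; rw [h] at hdist_x11; omega
  have hne_x11_x1111 : x11 ≠ x1111 := by intro h; rw [h] at hdist_x11; omega
  have hne_x11_x2100 : x11 ≠ x2100 := by intro h; rw [h] at hdist_x11; omega
  have hne_x11_x2101 : x11 ≠ x2101 := by intro h; rw [h] at hdist_x11; omega
  have hne_x11_x11100 : x11 ≠ x11100 := by intro h; rw [h] at hdist_x11; omega
  have hne_x11_x21001 : x11 ≠ x21001 := by intro h; rw [h] at hdist_x11; omega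
  have hne_x20_x110 : x20 ≠ x110 := by intro h; rw [h] at hdist_x20; omega
  have hne_x20_x111 : x20 ≠ x111 := by intro h; rw [h] at hdist_x20; omega
  have hne_x20_x210 : x20 ≠ x210 := by intro h; rw [h] at hdist_x20; omega
  have hne_x20_x211 : x20 ≠ x211 := by intro h; rw [h] at hdist_x20; omega
  have hne_x20_x1110 : x20 ≠ x1110 := by intro h; rw [h] at hdist_x20; omega
  have hne_x20_x1111 : x20 ≠ x1111 := by intro h; rw [h] at hdist_x20; omega
  have hne_x20_x2100 : x20 ≠ x2100 := by intro h; rw [h] at hdist_x20; omega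
  have hne_x20_x2101 : x20 ≠ x2101 := by intro h; rw [h] at hdist_x20; omega
  have hne_x20_x11100 : x20 ≠ x11100 := by intro h; rw [h] at hdist_x20; omega
  have hne_x20_x21001 : x20 ≠ x21001 := by intro h; rw [h] at hdist_x20; omega
  have hne_x21_x110 : x21 ≠ x110 := by intro h; rw [h] at hdist_x21; omega
  have hne_x21_x111 : x21 ≠ x111 := by intro h; rw [h] at hdist_x21; omega
  have hne_x21_x210 : x21 ≠ x210 := by intro h; rw [h] at hdist_x21; omega
  have hne_x21_x211 : x21 ≠ x211 := by intro h; rw [h] at hdist_x21; omega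
  have hne_x21_x1110 : x21 ≠ x1110 := by intro h; rw [h] at hdist_x21; omega
  have hne_x21_x1111 : x21 ≠ x1111 := by intro h; rw [h] at hdist_x21; omega
  have hne_x21_x2100 : x21 ≠ x2100 := by intro h; rw [h] at hdist_x21; omega
  have hne_x21_x2101 : x21 ≠ x2101 := by intro h; rw [h] at hdist_x21; omega
  have hne_x21_x11100 : x21 ≠ x11100 := by intro h; rw [h] at hdist_x21; omega
  have hne_x21_x21001 : x21 ≠ x21001 := by intro h; rw [h] at hdist_x21; omega
  have hne_x110_x210 : x110 ≠ x210 := by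
    intro h; rw [h] at hadj_x11_x110
    exact hne_x11_x21 (unique_parent hT r hadj_x11_x110 hadj_x21_x210 (by omega) (by omega))
  have hne_x110_x211 : x110 ≠ x211 := by
    intro h; rw [h] at hadj_x11_x110
    exact hne_x11_x21 (unique_parent hT r hadj_x11_x110 hadj_x21_x211 (by omega) (by omega))
  have hne_x110_x1110 : x110 ≠ x1110 := by intro h; rw [h] at hdist_x110; omega
  have hne_x110_x1111 : x110 ≠ x1111 := by intro h; rw [h] at hdist_x110; omega
  have hne_x110_x2100 : x110 ≠ x2100 := by intro h; rw [h] at hdist_x110; omega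
  have hne_x110_x2101 : x110 ≠ x2101 := by intro h; rw [h] at hdist_x110; omega
  have hne_x110_x11100 : x110 ≠ x11100 := by intro h; rw [h] at hdist_x110; omega
  have hne_x110_x21001 : x110 ≠ x21001 := by intro h; rw [h] at hdist_x110; omega
  have hne_x111_x210 : x111 ≠ x210 := by
    intro h; rw [h] at hadj_x11_x111
    exact hne_x11_x21 (unique_parent hT r hadj_x11_x111 hadj_x21_x210 (by omega) (by omega))
  have hne_x111_x211 : x111 ≠ x211 := by
    intro h; rw [h] at hadj_x11_x111
    exact hne_x11_x21 (unique_parent hT r hadj_x11_x111 hadj_x21_x211 (by omega) (by omega))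
  have hne_x111_x1110 : x111 ≠ x1110 := by intro h; rw [h] at hdist_x111; omega
  have hne_x111_x1111 : x111 ≠ x1111 := by intro h; rw [h] at hdist_x111; omega
  have hne_x111_x2100 : x111 ≠ x2100 := by intro h; rw [h] at hdist_x111; omega
  have hne_x111_x2101 : x111 ≠ x2101 := by intro h; rw [h] at hdist_x111; omega
  have hne_x111_x11100 : x111 ≠ x11100 := by intro h; rw [h] at hdist_x111; omega
  have hne_x111_x21001 : x111 ≠ x21001 := by intro h; rw [h] at hdist_x111; omega
  have hne_x210_x1110 : x210 ≠ x1110 := by intro h; rw [h] at hdist_x210; omega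
  have hne_x210_x1111 : x210 ≠ x1111 := by intro h; rw [h] at hdist_x210; omega
  have hne_x210_x2100 : x210 ≠ x2100 := by intro h; rw [h] at hdist_x210; omega
  have hne_x210_x2101 : x210 ≠ x2101 := by intro h; rw [h] at hdist_x210; omega
  have hne_x210_x11100 : x210 ≠ x11100 := by intro h; rw [h] at hdist_x210; omega
  have hne_x210_x21001 : x210 ≠ x21001 := by intro h; rw [h] at hdist_x210; omega
  have hne_x211_x1110 : x211 ≠ x1110 := by intro h; rw [h] at hdist_x211; omega
  have hne_x211_x1111 : x211 ≠ x1111 := by intro h; rw [h] at hdist_x211; omega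
  have hne_x211_x2100 : x211 ≠ x2100 := by intro h; rw [h] at hdist_x211; omega
  have hne_x211_x2101 : x211 ≠ x2101 := by intro h; rw [h] at hdist_x211; omega
  have hne_x211_x11100 : x211 ≠ x11100 := by intro h; rw [h] at hdist_x211; omega
  have hne_x211_x21001 : x211 ≠ x21001 := by intro h; rw [h] at hdist_x211; omega
  have hne_x1110_x2100 : x1110 ≠ x2100 := by
    intro h; rw [h] at hadj_x111_x1110
    exact hne_x111_x210 (unique_parent hT r hadj_x111_x1110 hadj_x210_x2100 (by omega) (by omega))
  have hne_x1110_x2101 : x1110 ≠ x2101 := by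
    intro h; rw [h] at hadj_x111_x1110
    exact hne_x111_x210 (unique_parent hT r hadj_x111_x1110 hadj_x210_x2101 (by omega) (by omega))
  have hne_x1110_x11100 : x1110 ≠ x11100 := by intro h; rw [h] at hdist_x1110; omega
  have hne_x1110_x21001 : x1110 ≠ x21001 := by intro h; rw [h] at hdist_x1110; omega
  have hne_x1111_x2100 : x1111 ≠ x2100 := by
    intro h; rw [h] at hadj_x111_x1111
    exact hne_x111_x210 (unique_parent hT r hadj_x111_x1111 hadj_x210_x2100 (by omega) (by omega))
  have hne_x1111_x2101 : x1111 ≠ x2101 := by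
    intro h; rw [h] at hadj_x111_x1111
    exact hne_x111_x210 (unique_parent hT r hadj_x111_x1111 hadj_x210_x2101 (by omega) (by omega))
  have hne_x1111_x11100 : x1111 ≠ x11100 := by intro h; rw [h] at hdist_x1111; omega
  have hne_x1111_x21001 : x1111 ≠ x21001 := by intro h; rw [h] at hdist_x1111; omega
  have hne_x2100_x11100 : x2100 ≠ x11100 := by intro h; rw [h] at hdist_x2100; omega
  have hne_x2100_x21001 : x2100 ≠ x21001 := by intro h; rw [h] at hdist_x2100; omega
  have hne_x2101_x11100 : x2101 ≠ x11100 := by intro h; rw [h] at hdist_x2101; omega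
  have hne_x2101_x21001 : x2101 ≠ x21001 := by intro h; rw [h] at hdist_x2101; omega
  have hne_x11100_x21001 : x11100 ≠ x21001 := by
    intro h; rw [h] at hadj_x1110_x11100
    exact hne_x1110_x2100 (unique_parent hT r hadj_x1110_x11100 hadj_x2100_x21001 (by omega) (by omega))
  rcases key4 hk c hrainbow hcon r x0 x1 x2 with hq1 | hq1 | hq1 | hq1 | hq1 | hq1
  · -- case
    exact nr2' hnr hadj_r_x0 hq1
  · -- case
    exact nr2' hnr hadj_r_x1 hq1
  · -- case
    exact nr2' hnr hadj_r_x2 hq1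
  · -- case
    rcases key4 hk c hrainbow hcon r x1 x10 x11 with hq2 | hq2 | hq2 | hq2 | hq2 | hq2
    · -- case
      exact nr2' hnr hadj_r_x1 hq2
    · -- case
      exact nr4' hnr hne_x0_x1 hne_r_x10 hne_x0_x10 (hadj_r_x0.symm) hadj_r_x1 hadj_x1_x10 hq1 hq2
    · -- case
      exact nr4' hnr hne_x0_x1 (Ne.symm hne_x11_r) hne_x0_x11 (hadj_r_x0.symm) hadj_r_x1 hadj_x1_x11 hq1 hq2
    · -- case
      exact nr2' hnr hadj_x1_x10 hq2
    · -- case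
      exact nr2' hnr hadj_x1_x11 hq2
    · -- case
      rcases key4 hk c hrainbow hcon r x1 x11 x111 with hq3 | hq3 | hq3 | hq3 | hq3 | hq3
      · -- case
        exact nr2' hnr hadj_r_x1 hq3
      · -- case
        exact nr4' hnr hne_x0_x1 (Ne.symm hne_x11_r) hne_x0_x11 (hadj_r_x0.symm) hadj_r_x1 hadj_x1_x11 hq1 hq3
      · -- case
        rcases key4 hk c hrainbow hcon x1 x11 x110 x111 with hq4 | hq4 | hq4 | hq4 | hq4 | hq4
        · -- case
          exact nr2' hnr hadj_x1_x11 hq4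
        · -- case
          exact nr4' hnr hne_x10_x11 hne_x1_x110 hne_x10_x110 (hadj_x1_x10.symm) hadj_x1_x11 hadj_x11_x110 hq2 hq4
        · -- case
          exact nr4' hnr hne_x10_x11 hne_x1_x111 hne_x10_x111 (hadj_x1_x10.symm) hadj_x1_x11 hadj_x11_x111 hq2 hq4
        · -- case
          exact nr2' hnr hadj_x11_x110 hq4
        · -- case
          exact nr2' hnr hadj_x11_x111 hq4
        · -- case
          rcases key4 hk c hrainbow hcon x1 x11 x111 x1110 with hq5 | hq5 | hq5 | hq5 | hq5 | hq5
          · -- case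
            exact nr2' hnr hadj_x1_x11 hq5
          · -- case
            exact nr4' hnr hne_x10_x11 hne_x1_x111 hne_x10_x111 (hadj_x1_x10.symm) hadj_x1_x11 hadj_x11_x111 hq2 hq5
          · -- case
            rcases key4 hk c hrainbow hcon x11 x111 x1110 x1111 with hq6 | hq6 | hq6 | hq6 | hq6 | hq6
            · -- case
              exact nr2' hnr hadj_x11_x111 hq6
            · -- case
              exact nr4' hnr hne_x110_x111 hne_x11_x1110 hne_x110_x1110 (hadj_x11_x110.symm) hadj_x11_x111 hadj_x111_x1110 hq4 hq6
            · -- case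
              exact nr4' hnr hne_x110_x111 hne_x11_x1111 hne_x110_x1111 (hadj_x11_x110.symm) hadj_x11_x111 hadj_x111_x1111 hq4 hq6
            · -- case
              exact nr2' hnr hadj_x111_x1110 hq6
            · -- case
              exact nr2' hnr hadj_x111_x1111 hq6
            · -- case
              rcases key4 hk c hrainbow hcon x11 x111 x1110 x11100 with hq7 | hq7 | hq7 | hq7 | hq7 | hq7
              · -- case
                exact nr2' hnr hadj_x11_x111 hq7
              · -- case
                exact nr4' hnr hne_x110_x111 hne_x11_x1110 hne_x110_x1110 (hadj_x11_x110.symm) hadj_x11_x111 hadj_x111_x1110 hq4 hq7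
              · -- case
                exact nr6' hnr (Ne.symm hne_x11_r) (Ne.symm hne_x111_r) (Ne.symm hne_x1110_r) hne_r_x11100 hne_x1_x111 hne_x1_x1110 hne_x1_x11100 hne_x11_x1110 hne_x11_x11100 hne_x111_x11100 hadj_r_x1 hadj_x1_x11 hadj_x11_x111 hadj_x111_x1110 hadj_x1110_x11100 hq3 hq5 hq7
              · -- case
                exact nr2' hnr hadj_x111_x1110 hq7
              · -- case
                exact nr4' hnr (Ne.symm hne_x1110_x1111) hne_x111_x11100 hne_x1111_x11100 (hadj_x111_x1111.symm) hadj_x111_x1110 hadj_x1110_x11100 (relC_symm hq6) hq7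
              · -- case
                exact nr2' hnr hadj_x1110_x11100 hq7
          · -- case
            exact nr2' hnr hadj_x11_x111 hq5
          · -- case
            exact nr4' hnr hne_x110_x111 hne_x11_x1110 hne_x110_x1110 (hadj_x11_x110.symm) hadj_x11_x111 hadj_x111_x1110 hq4 hq5
          · -- case
            exact nr2' hnr hadj_x111_x1110 hq5
      · -- case
        exact nr2' hnr hadj_x1_x11 hq3
      · -- case
        exact nr4' hnr hne_x10_x11 hne_x1_x111 hne_x10_x111 (hadj_x1_x10.symm) hadj_x1_x11 hadj_x11_x111 hq2 hq3
      · -- case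
        exact nr2' hnr hadj_x11_x111 hq3
  · -- case
    rcases key4 hk c hrainbow hcon r x2 x20 x21 with hq2 | hq2 | hq2 | hq2 | hq2 | hq2
    · -- case
      exact nr2' hnr hadj_r_x2 hq2
    · -- case
      exact nr4' hnr hne_x0_x2 hne_r_x20 hne_x0_x20 (hadj_r_x0.symm) hadj_r_x2 hadj_x2_x20 hq1 hq2
    · -- case
      exact nr4' hnr hne_x0_x2 (Ne.symm hne_x21_r) hne_x0_x21 (hadj_r_x0.symm) hadj_r_x2 hadj_x2_x21 hq1 hq2
    · -- case
      exact nr2' hnr hadj_x2_x20 hq2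
    · -- case
      exact nr2' hnr hadj_x2_x21 hq2
    · -- case
      rcases key4 hk c hrainbow hcon x2 x21 x210 x211 with hq3 | hq3 | hq3 | hq3 | hq3 | hq3
      · -- case
        exact nr2' hnr hadj_x2_x21 hq3
      · -- case
        exact nr4' hnr hne_x20_x21 hne_x2_x210 hne_x20_x210 (hadj_x2_x20.symm) hadj_x2_x21 hadj_x21_x210 hq2 hq3
      · -- case
        exact nr4' hnr hne_x20_x21 hne_x2_x211 hne_x20_x211 (hadj_x2_x20.symm) hadj_x2_x21 hadj_x21_x211 hq2 hq3
      · -- case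
        exact nr2' hnr hadj_x21_x210 hq3
      · -- case
        exact nr2' hnr hadj_x21_x211 hq3
      · -- case
        rcases key4 hk c hrainbow hcon x2 x21 x210 x2100 with hq4 | hq4 | hq4 | hq4 | hq4 | hq4
        · -- case
          exact nr2' hnr hadj_x2_x21 hq4
        · -- case
          exact nr4' hnr hne_x20_x21 hne_x2_x210 hne_x20_x210 (hadj_x2_x20.symm) hadj_x2_x21 hadj_x21_x210 hq2 hq4
        · -- case
          rcases key4 hk c hrainbow hcon x21 x210 x2100 x2101 with hq5 | hq5 | hq5 | hq5 | hq5 | hq5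
          · -- case
            exact nr2' hnr hadj_x21_x210 hq5
          · -- case
            exact nr4' hnr (Ne.symm hne_x210_x211) hne_x21_x2100 hne_x211_x2100 (hadj_x21_x211.symm) hadj_x21_x210 hadj_x210_x2100 (relC_symm hq3) hq5
          · -- case
            exact nr4' hnr (Ne.symm hne_x210_x211) hne_x21_x2101 hne_x211_x2101 (hadj_x21_x211.symm) hadj_x21_x210 hadj_x210_x2101 (relC_symm hq3) hq5
          · -- case
            exact nr2' hnr hadj_x210_x2100 hq5
          · -- case
            exact nr2' hnr hadj_x210_x2101 hq5
          · -- case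
            rcases key4 hk c hrainbow hcon x21 x210 x2100 x21001 with hq6 | hq6 | hq6 | hq6 | hq6 | hq6
            · -- case
              exact nr2' hnr hadj_x21_x210 hq6
            · -- case
              exact nr4' hnr (Ne.symm hne_x210_x211) hne_x21_x2100 hne_x211_x2100 (hadj_x21_x211.symm) hadj_x21_x210 hadj_x210_x2100 (relC_symm hq3) hq6
            · -- case
              rcases key4 hk c hrainbow hcon r x2 x20 x210 with hq7 | hq7 | hq7 | hq7 | hq7 | hq7
              · -- case
                exact nr2' hnr hadj_r_x2 hq7
              · -- case
                exact nr4' hnr hne_x0_x2 hne_r_x20 hne_x0_x20 (hadj_r_x0.symm) hadj_r_x2 hadj_x2_x20 hq1 hq7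
              · -- case
                exact nr6' hnr (Ne.symm hne_x21_r) (Ne.symm hne_x210_r) (Ne.symm hne_x2100_r) hne_r_x21001 hne_x2_x210 hne_x2_x2100 hne_x2_x21001 hne_x21_x2100 hne_x21_x21001 hne_x210_x21001 hadj_r_x2 hadj_x2_x21 hadj_x21_x210 hadj_x210_x2100 hadj_x2100_x21001 hq7 hq4 hq6
              · -- case
                exact nr2' hnr hadj_x2_x20 hq7
              · -- case
                exact nr4' hnr hne_x20_x21 hne_x2_x210 hne_x20_x210 (hadj_x2_x20.symm) hadj_x2_x21 hadj_x21_x210 hq2 hq7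
              · -- case
                exact nr6' hnr hne_x20_x21 hne_x20_x210 hne_x20_x2100 hne_x20_x21001 hne_x2_x210 hne_x2_x2100 hne_x2_x21001 hne_x21_x2100 hne_x21_x21001 hne_x210_x21001 (hadj_x2_x20.symm) hadj_x2_x21 hadj_x21_x210 hadj_x210_x2100 hadj_x2100_x21001 hq7 hq4 hq6
            · -- case
              exact nr2' hnr hadj_x210_x2100 hq6
            · -- case
              exact nr4' hnr (Ne.symm hne_x2100_x2101) hne_x210_x21001 hne_x2101_x21001 (hadj_x210_x2101.symm) hadj_x210_x2100 hadj_x2100_x21001 (relC_symm hq5) hq6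
            · -- case
              exact nr2' hnr hadj_x2100_x21001 hq6
        · -- case
          exact nr2' hnr hadj_x21_x210 hq4
        · -- case
          exact nr4' hnr (Ne.symm hne_x210_x211) hne_x21_x2100 hne_x211_x2100 (hadj_x21_x211.symm) hadj_x21_x210 hadj_x210_x2100 (relC_symm hq3) hq4
        · -- case
          exact nr2' hnr hadj_x210_x2100 hq4
  · -- case
    rcases key4 hk c hrainbow hcon r x1 x10 x11 with hq2 | hq2 | hq2 | hq2 | hq2 | hq2
    · -- case
      exact nr2' hnr hadj_r_x1 hq2
    · -- case
      exact nr4' hnr (Ne.symm hne_x1_x2) hne_r_x10 hne_x2_x10 (hadj_r_x2.symm) hadj_r_x1 hadj_x1_x10 (relC_symm hq1) hq2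
    · -- case
      exact nr4' hnr (Ne.symm hne_x1_x2) (Ne.symm hne_x11_r) hne_x2_x11 (hadj_r_x2.symm) hadj_r_x1 hadj_x1_x11 (relC_symm hq1) hq2
    · -- case
      exact nr2' hnr hadj_x1_x10 hq2
    · -- case
      exact nr2' hnr hadj_x1_x11 hq2
    · -- case
      rcases key4 hk c hrainbow hcon r x1 x11 x111 with hq3 | hq3 | hq3 | hq3 | hq3 | hq3
      · -- case
        exact nr2' hnr hadj_r_x1 hq3
      · -- case
        exact nr4' hnr (Ne.symm hne_x1_x2) (Ne.symm hne_x11_r) hne_x2_x11 (hadj_r_x2.symm) hadj_r_x1 hadj_x1_x11 (relC_symm hq1) hq3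
      · -- case
        rcases key4 hk c hrainbow hcon x1 x11 x110 x111 with hq4 | hq4 | hq4 | hq4 | hq4 | hq4
        · -- case
          exact nr2' hnr hadj_x1_x11 hq4
        · -- case
          exact nr4' hnr hne_x10_x11 hne_x1_x110 hne_x10_x110 (hadj_x1_x10.symm) hadj_x1_x11 hadj_x11_x110 hq2 hq4
        · -- case
          exact nr4' hnr hne_x10_x11 hne_x1_x111 hne_x10_x111 (hadj_x1_x10.symm) hadj_x1_x11 hadj_x11_x111 hq2 hq4
        · -- case
          exact nr2' hnr hadj_x11_x110 hq4
        · -- case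
          exact nr2' hnr hadj_x11_x111 hq4
        · -- case
          rcases key4 hk c hrainbow hcon x1 x11 x111 x1110 with hq5 | hq5 | hq5 | hq5 | hq5 | hq5
          · -- case
            exact nr2' hnr hadj_x1_x11 hq5
          · -- case
            exact nr4' hnr hne_x10_x11 hne_x1_x111 hne_x10_x111 (hadj_x1_x10.symm) hadj_x1_x11 hadj_x11_x111 hq2 hq5
          · -- case
            rcases key4 hk c hrainbow hcon x11 x111 x1110 x1111 with hq6 | hq6 | hq6 | hq6 | hq6 | hq6
            · -- case
              exact nr2' hnr hadj_x11_x111 hq6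
            · -- case
              exact nr4' hnr hne_x110_x111 hne_x11_x1110 hne_x110_x1110 (hadj_x11_x110.symm) hadj_x11_x111 hadj_x111_x1110 hq4 hq6
            · -- case
              exact nr4' hnr hne_x110_x111 hne_x11_x1111 hne_x110_x1111 (hadj_x11_x110.symm) hadj_x11_x111 hadj_x111_x1111 hq4 hq6
            · -- case
              exact nr2' hnr hadj_x111_x1110 hq6
            · -- case
              exact nr2' hnr hadj_x111_x1111 hq6
            · -- case
              rcases key4 hk c hrainbow hcon x11 x111 x1110 x11100 with hq7 | hq7 | hq7 | hq7 | hq7 | hq7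
              · -- case
                exact nr2' hnr hadj_x11_x111 hq7
              · -- case
                exact nr4' hnr hne_x110_x111 hne_x11_x1110 hne_x110_x1110 (hadj_x11_x110.symm) hadj_x11_x111 hadj_x111_x1110 hq4 hq7
              · -- case
                exact nr6' hnr (Ne.symm hne_x11_r) (Ne.symm hne_x111_r) (Ne.symm hne_x1110_r) hne_r_x11100 hne_x1_x111 hne_x1_x1110 hne_x1_x11100 hne_x11_x1110 hne_x11_x11100 hne_x111_x11100 hadj_r_x1 hadj_x1_x11 hadj_x11_x111 hadj_x111_x1110 hadj_x1110_x11100 hq3 hq5 hq7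
              · -- case
                exact nr2' hnr hadj_x111_x1110 hq7
              · -- case
                exact nr4' hnr (Ne.symm hne_x1110_x1111) hne_x111_x11100 hne_x1111_x11100 (hadj_x111_x1111.symm) hadj_x111_x1110 hadj_x1110_x11100 (relC_symm hq6) hq7
              · -- case
                exact nr2' hnr hadj_x1110_x11100 hq7
          · -- case
            exact nr2' hnr hadj_x11_x111 hq5
          · -- case
            exact nr4' hnr hne_x110_x111 hne_x11_x1110 hne_x110_x1110 (hadj_x11_x110.symm) hadj_x11_x111 hadj_x111_x1110 hq4 hq5
          · -- case
            exact nr2' hnr hadj_x111_x1110 hq5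
      · -- case
        exact nr2' hnr hadj_x1_x11 hq3
      · -- case
        exact nr4' hnr hne_x10_x11 hne_x1_x111 hne_x10_x111 (hadj_x1_x10.symm) hadj_x1_x11 hadj_x11_x111 hq2 hq3
      · -- case
        exact nr2' hnr hadj_x11_x111 hq3
end
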